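/- For all real x, arctan(x) = 2·∑_{m=1}^∞ (1/(2m−1)) · g_m(x) / (g_m(x)² + h_m(x)²) whenever x ≠ 0, where g₁ = 2/x, h₁ = 1, g_m = g_{m−1}(1 − 4/x²) + 4h_{m−1}/x, h_m = h_{m−1}(1 − 4/x²) − 4g_{m−1}/x, and g_m(x)² + h_m(x)² ≠ 0 for all m. -/

import Mathlib

open Real

theorem arctan_gh_series (x : ℝ) (hx : x ≠ 0) (g h : ℕ → ℝ)
    (hg1 : g 1 = 2 / x) (hh1 : h 1 = 1)
    (hg : ∀ m, 2 ≤ m → g m = g (m - 1) * (1 - 4 / x ^ 2) + 4 * h (m - 1) / x)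
    (hh : ∀ m, 2 ≤ m → h m = h (m - 1) * (1 - 4 / x ^ 2) - 4 * g (m - 1) / x)
    (hne : ∀ m, 1 ≤ m → g m ^ 2 + h m ^ 2 ≠ 0) :
    HasSum
      (fun m : ℕ =>
        2 * (1 / (2 * (m + 1 : ℝ) - 1)) * (g (m + 1) / (g (m + 1) ^ 2 + h (m + 1) ^ 2)))
      (Real.arctan x) := by
  have hX : (x : ℂ) ≠ 0 := Complex.ofReal_ne_zero.mpr hx
  obtain ⟨D, hDdef⟩ : ∃ D : ℂ, D = (x : ℂ) - 2 * Complex.I := ⟨_, rfl⟩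
  have hD : D ≠ 0 := by
    intro h0
    have : D.im = 0 := by rw [h0]; simp
    simp [hDdef] at this
  obtain ⟨u, hudef⟩ : ∃ u : ℂ, u = (x : ℂ) / D := ⟨_, rfl⟩
  have hu : ‖u‖ < 1 := by
    rw [hudef, norm_div, div_lt_one (norm_pos_iff.mpr hD)]
    have h1 : ‖(x:ℂ)‖ ^ 2 = x ^ 2 := by
      rw [Complex.sq_norm, Complex.normSq_apply]; simp; ring
    have h2 : ‖D‖ ^ 2 = x ^ 2 + 4 := by
      rw [Complex.sq_norm, Complex.normSq_apply]
      simp [hDdef]; ring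
    refine lt_of_pow_lt_pow_left₀ 2 (norm_nonneg D) ?_
    rw [h1, h2]; linarith
  have key : ∀ n : ℕ, ((g (n+1) : ℂ) + (h (n+1) : ℂ) * Complex.I)
      = Complex.I * (D / (x:ℂ)) ^ (2*n+1) := by
    intro n
    induction n with
    | zero =>
      rw [hg1, hh1]
      push_cast
      rw [pow_one, hDdef]
      field_simp
      linear_combination (2:ℂ) * Complex.I_sq
    | succ n ih =>
      have e1 := hg (n+2) (by omega)
      have e2 := hh (n+2) (by omega)
      simp only [show n+2-1 = n+1 from rfl] at e1 e2
      rw [show n+1+1 = n+2 from rfl, e1, e2]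
      push_cast
      rw [show 2*(n+1)+1 = (2*n+1)+2 by ring, pow_add, mul_comm ((D / (x:ℂ)) ^ (2*n+1)) ((D / (x:ℂ)) ^ 2), ← mul_assoc, mul_comm Complex.I ((D / (x:ℂ)) ^ 2), mul_assoc, ← ih, hDdef]
      field_simp
      linear_combination ((-4:ℂ)*(g (n+1)) + 4*(x:ℂ)*(h (n+1)) - 4*(h (n+1))*Complex.I) * Complex.I_sq
  have hv : ‖Complex.I * u‖ < 1 := by rwa [norm_mul, Complex.norm_I, one_mul]
  have H := (Complex.hasSum_arctan hv).mul_left (-2*Complex.I)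
  have HI : HasSum
      (fun n : ℕ => (((-2*Complex.I) * ((-1:ℂ)^n * (Complex.I*u)^(2*n+1) / ((2*n+1:ℕ):ℂ))).im))
      (((-2*Complex.I) * Complex.arctan (Complex.I*u)).im) := Complex.hasSum_im H
  have hterm : ∀ n : ℕ,
      (((-2*Complex.I) * ((-1:ℂ)^n * (Complex.I*u)^(2*n+1) / ((2*n+1:ℕ):ℂ))).im)
      = 2 * (1 / (2 * (n + 1 : ℝ) - 1)) * (g (n + 1) / (g (n + 1) ^ 2 + h (n + 1) ^ 2)) := by
    intro n
    have hIpow : ((-1:ℂ))^n * (Complex.I*u)^(2*n+1) = Complex.I * u^(2*n+1) := by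
      rw [mul_pow, pow_add, pow_mul, Complex.I_sq, pow_one, ← mul_assoc, ← mul_assoc,
        ← mul_pow]
      norm_num
    have hsimp : (-2*Complex.I) * ((-1:ℂ)^n * (Complex.I*u)^(2*n+1) / ((2*n+1:ℕ):ℂ))
        = (((2 / (2*(n:ℝ)+1) : ℝ)) : ℂ) * u^(2*n+1) := by
      rw [hIpow]
      push_cast
      linear_combination (-(2*u^(2*n+1))/(2*(n:ℂ)+1)) * Complex.I_sq
    rw [hsimp, Complex.im_ofReal_mul]
    -- now the g/h part
    have hw := key n
    have hre : g (n + 1) = (Complex.I * (D / (x:ℂ)) ^ (2*n+1)).re := by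
      rw [← hw]; simp
    have him : h (n + 1) = (Complex.I * (D / (x:ℂ)) ^ (2*n+1)).im := by
      rw [← hw]; simp
    have hinv : (Complex.I * (D / (x:ℂ)) ^ (2*n+1))⁻¹ = -Complex.I * u ^ (2*n+1) := by
      rw [mul_inv, Complex.inv_I, ← inv_pow, inv_div, hudef]
    have hgoal2 : g (n+1) / (g (n+1)^2 + h (n+1)^2) = (u ^ (2*n+1)).im := by
      have h1 : (u ^ (2*n+1)).im = ((Complex.I * (D / (x:ℂ)) ^ (2*n+1))⁻¹).re := by
        rw [hinv]; simp
      rw [h1, Complex.inv_re, hre, him, Complex.normSq_apply]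
      ring
    rw [hgoal2]
    have hne2 : (2*(n:ℝ)+1) ≠ 0 := by positivity
    push_cast
    rw [show 2*((n:ℝ)+1)-1 = 2*(n:ℝ)+1 by ring]
    field_simp
  have hz1 : (1:ℂ) + (x:ℂ)*Complex.I ≠ 0 := by
    intro h0; have := congrArg Complex.re h0; simp at this
  have hr : ((1:ℂ) - u) / (1 + u) = (1 + (x:ℂ) * Complex.I)⁻¹ := by
    have hnum : ((2:ℂ) * (x:ℂ) - 2 * Complex.I) ≠ 0 := by
      intro h0; have := congrArg Complex.im h0; simp at this
    have h1u : (1:ℂ) - u = -2 * Complex.I / D := by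
      rw [hudef, eq_div_iff hD, sub_mul, one_mul, div_mul_cancel₀ _ hD, hDdef]; ring
    have h2u : (1:ℂ) + u = (2*(x:ℂ) - 2*Complex.I) / D := by
      rw [hudef, eq_div_iff hD, add_mul, one_mul, div_mul_cancel₀ _ hD, hDdef]; ring
    rw [h1u, h2u]
    have hstep : (-2*Complex.I/D) / ((2*(x:ℂ)-2*Complex.I)/D)
        = -2*Complex.I / (2*(x:ℂ)-2*Complex.I) := by
      rw [div_div_div_eq, mul_comm (-2*Complex.I) D, mul_div_mul_left _ _ hD]
    rw [hstep, div_eq_iff hnum, inv_mul_eq_div, eq_div_iff hz1]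
    linear_combination (-2*(x:ℂ)) * Complex.I_sq
  have harg : ((1:ℂ) + (x:ℂ)*Complex.I).arg ≠ π := by
    intro h0
    rw [Complex.arg_eq_pi_iff] at h0
    simp at h0
    linarith [h0.1]
  have hVal : ((-2*Complex.I) * Complex.arctan (Complex.I*u)).im = Real.arctan x := by
    rw [Complex.arctan]
    rw [show (1:ℂ) + Complex.I*u*Complex.I = 1 - u from by linear_combination u * Complex.I_sq]
    rw [show (1:ℂ) - Complex.I*u*Complex.I = 1 + u from by linear_combination (-u) * Complex.I_sq]
    rw [hr, Complex.log_inv _ harg]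
    rw [show (-2*Complex.I) * (-Complex.I/2 * -Complex.log (1+(x:ℂ)*Complex.I))
        = Complex.log (1+(x:ℂ)*Complex.I) from by
      linear_combination (-Complex.log (1+(x:ℂ)*Complex.I)) * Complex.I_sq]
    rw [Complex.log_im]
    have ht : Real.tan (((1:ℂ) + (x:ℂ)*Complex.I).arg) = x := by
      rw [Complex.tan_arg]; simp
    have hb := abs_lt.mp (Complex.abs_arg_lt_pi_div_two_iff.mpr (Or.inl (by simp : (0:ℝ) < ((1:ℂ) + (x:ℂ)*Complex.I).re)))
    have h2 := Real.arctan_tan hb.1 hb.2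
    rw [ht] at h2
    exact h2.symm
  have hfun : (fun n : ℕ => (((-2*Complex.I) * ((-1:ℂ)^n * (Complex.I*u)^(2*n+1) / ((2*n+1:ℕ):ℂ))).im))
      = fun m : ℕ => 2 * (1 / (2 * (m + 1 : ℝ) - 1)) * (g (m + 1) / (g (m + 1) ^ 2 + h (m + 1) ^ 2)) :=
    funext hterm
  rw [hfun, hVal] at HI
  exact HI
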